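/- If the constants C_{2r} satisfy Σ_{r=1}^m C_{2r} = m − (1/2) log m + O(log^{2/3}(m+1)), then for any continuous function E : [0,1] → ℝ, one has 2 Σ_{0 < 2r ≤ λ} E(2r/λ) C_{2r} − λ ∫₀^1 E(ν) dν = o(λ) as λ → ∞. -/

import Mathlib

open Real Filter
set_option maxHeartbeats 1000000

lemma abel_sum (f g : ℕ → ℝ) (hg : g 0 = 0) (M : ℕ) :
    ∑ r ∈ Finset.Icc 1 M, f r * (g r - g (r - 1))
      = f M * g M - ∑ r ∈ Finset.Icc 1 (M - 1), (f (r + 1) - f r) * g r := by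
  induction M with
  | zero => simp [hg]
  | succ M ih =>
    rw [Finset.sum_Icc_succ_top (by omega : 1 ≤ M + 1), ih]
    simp only [Nat.add_sub_cancel]
    cases M with
    | zero => simp [hg]
    | succ k =>
      rw [Finset.sum_Icc_succ_top (by omega : 1 ≤ k + 1)]
      simp only [Nat.succ_sub_one]
      ring

lemma lip_case (C : ℕ → ℝ) (K : ℝ) (hK1 : (0:ℝ) ≤ K + 1)
    (hD : ∀ m : ℕ, |(∑ r ∈ Finset.Icc 1 m, C r) - (m : ℝ)|
      ≤ (K + 1) * (Real.log (m + 1) + 1))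
    (F : ℝ → ℝ) (hFc : ContinuousOn F (Set.Icc 0 1)) (L : ℝ) (hL : 0 ≤ L)
    (hF : ∀ x ∈ Set.Icc (0:ℝ) 1, ∀ y ∈ Set.Icc (0:ℝ) 1, |F x - F y| ≤ L * |x - y|) :
    Tendsto (fun lam : ℝ =>
        (2 * (∑ r ∈ Finset.Icc 1 ⌊lam / 2⌋₊, F (2 * r / lam) * C r)
          - lam * ∫ v in (0:ℝ)..1, F v) / lam) atTop (nhds 0) := by
  set Fb : ℝ := |F 0| + L with hFbdef
  have hFbd : ∀ x ∈ Set.Icc (0:ℝ) 1, |F x| ≤ Fb := by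
    intro x hx
    have h1 := hF x hx 0 (by constructor <;> norm_num)
    have h2 : |x - 0| ≤ 1 := by rw [sub_zero, abs_of_nonneg hx.1]; exact hx.2
    have h3 : |F x - F 0| ≤ L := by nlinarith [abs_nonneg (x - 0)]
    calc |F x| = |F 0 + (F x - F 0)| := by ring_nf
    _ ≤ |F 0| + |F x - F 0| := abs_add_le _ _
    _ ≤ Fb := by rw [hFbdef]; linarith
  have hFb0 : 0 ≤ Fb := le_trans (abs_nonneg _) (hFbd 0 (by constructor <;> norm_num))
  apply squeeze_zero_norm'
    (a := fun lam : ℝ => (2*(Fb+L)*((K+1)*(Real.log lam + 1)) + (2*L + 2*Fb))/lam)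
  · filter_upwards [eventually_ge_atTop (2:ℝ)] with lam hlam
    have hlam0 : (0:ℝ) < lam := by linarith
    set M := ⌊lam/2⌋₊ with hMdef
    have hM1 : 1 ≤ M := Nat.le_floor (by push_cast; linarith)
    have hMle : (M:ℝ) ≤ lam/2 := Nat.floor_le (by positivity)
    have hMgt : lam/2 < M + 1 := Nat.lt_floor_add_one _
    have hh : (0:ℝ) < 2/lam := by positivity
    have hMh : (M:ℝ) * (2/lam) ≤ 1 := by
      calc (M:ℝ)*(2/lam) ≤ (lam/2)*(2/lam) := by nlinarith
      _ = 1 := by field_simp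
    have h1Mh : 1 - (M:ℝ)*(2/lam) ≤ 2/lam := by
      have e : (lam/2)*(2/lam) = 1 := by field_simp
      nlinarith
    have hpt : ∀ r : ℕ, r ≤ M → (2*(r:ℝ)/lam) ∈ Set.Icc (0:ℝ) 1 := by
      intro r hr
      have hrM : (r:ℝ) ≤ M := by exact_mod_cast hr
      constructor
      · positivity
      · calc 2*(r:ℝ)/lam = (r:ℝ)*(2/lam) := by ring
        _ ≤ (M:ℝ)*(2/lam) := by nlinarith
        _ ≤ 1 := hMh
    -- Piece B : Abel summation
    set g : ℕ → ℝ := fun m => (∑ r ∈ Finset.Icc 1 m, C r) - m with hgdef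
    have hg0 : g 0 = 0 := by simp [hgdef]
    have hstep : ∀ r : ℕ, 1 ≤ r → g r - g (r-1) = C r - 1 := by
      intro r hr
      obtain ⟨k, rfl⟩ : ∃ k, r = k + 1 := ⟨r - 1, by omega⟩
      simp only [hgdef, Nat.add_sub_cancel]
      rw [Finset.sum_Icc_succ_top (by omega : 1 ≤ k+1)]
      push_cast; ring
    have hBsum : ∑ r ∈ Finset.Icc 1 M, F (2*r/lam) * (C r - 1)
        = F (2*M/lam) * g M
          - ∑ r ∈ Finset.Icc 1 (M-1), (F (2*((r:ℝ)+1)/lam) - F (2*r/lam)) * g r := by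
      have habel := abel_sum (fun r : ℕ => F (2*r/lam)) g hg0 M
      push_cast at habel
      rw [← habel]
      apply Finset.sum_congr rfl
      intro r hr
      rw [hstep r (Finset.mem_Icc.mp hr).1]
    have hgbd : ∀ m : ℕ, m ≤ M → |g m| ≤ (K+1)*(Real.log lam + 1) := by
      intro m hm
      refine le_trans (hD m) (mul_le_mul_of_nonneg_left ?_ hK1)
      have hmM : (m:ℝ) ≤ M := by exact_mod_cast hm
      have h1 : (m:ℝ)+1 ≤ lam := by linarith
      have := Real.log_le_log (by positivity : (0:ℝ) < (m:ℝ)+1) h1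
      linarith
    have hB : |∑ r ∈ Finset.Icc 1 M, F (2*r/lam) * (C r - 1)|
        ≤ (Fb + L) * ((K+1)*(Real.log lam + 1)) := by
      rw [hBsum]
      have hKL : (0:ℝ) ≤ (K+1)*(Real.log lam + 1) :=
        le_trans (abs_nonneg _) (hgbd 0 (by omega))
      have t1 : |F (2*M/lam) * g M| ≤ Fb * ((K+1)*(Real.log lam + 1)) := by
        rw [abs_mul]
        exact mul_le_mul (hFbd _ (hpt M le_rfl)) (hgbd M le_rfl) (abs_nonneg _) hFb0
      have t2 : |∑ r ∈ Finset.Icc 1 (M-1), (F (2*((r:ℝ)+1)/lam) - F (2*r/lam)) * g r|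
          ≤ L * ((K+1)*(Real.log lam + 1)) := by
        calc |∑ r ∈ Finset.Icc 1 (M-1), (F (2*((r:ℝ)+1)/lam) - F (2*r/lam)) * g r|
            ≤ ∑ r ∈ Finset.Icc 1 (M-1), |(F (2*((r:ℝ)+1)/lam) - F (2*r/lam)) * g r| :=
              Finset.abs_sum_le_sum_abs _ _
        _ ≤ ∑ r ∈ Finset.Icc 1 (M-1), (L*(2/lam)) * ((K+1)*(Real.log lam + 1)) := by
            apply Finset.sum_le_sum
            intro r hr
            obtain ⟨hr1, hr2⟩ := Finset.mem_Icc.mp hr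
            have hrM : r + 1 ≤ M := by omega
            rw [abs_mul]
            apply mul_le_mul _ (hgbd r (by omega)) (abs_nonneg _) (by positivity)
            have hdiff := hF _ (hpt (r+1) hrM) _ (hpt r (by omega))
            push_cast at hdiff
            have habs : |2*((r:ℝ)+1)/lam - 2*(r:ℝ)/lam| = 2/lam := by
              rw [show 2*((r:ℝ)+1)/lam - 2*(r:ℝ)/lam = 2/lam by field_simp; ring]
              exact abs_of_pos hh
            calc |F (2*((r:ℝ)+1)/lam) - F (2*(r:ℝ)/lam)|
                ≤ L * |2*((r:ℝ)+1)/lam - 2*(r:ℝ)/lam| := hdiff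
            _ = L * (2/lam) := by rw [habs]
        _ = ((M-1 : ℕ):ℝ) * ((L*(2/lam)) * ((K+1)*(Real.log lam + 1))) := by
            rw [Finset.sum_const, Nat.card_Icc, nsmul_eq_mul]
            norm_num
        _ ≤ L * ((K+1)*(Real.log lam + 1)) := by
            have hcard : ((M-1:ℕ):ℝ) * (2/lam) ≤ 1 := by
              have : ((M-1:ℕ):ℝ) ≤ (M:ℝ) := by exact_mod_cast Nat.sub_le M 1
              nlinarith
            have hLc : (0:ℝ) ≤ L * ((K+1)*(Real.log lam + 1)) := mul_nonneg hL hKL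
            nlinarith [mul_le_mul_of_nonneg_right hcard hLc]
      calc |F (2*M/lam) * g M - ∑ r ∈ Finset.Icc 1 (M-1),
              (F (2*((r:ℝ)+1)/lam) - F (2*r/lam)) * g r|
          ≤ |F (2*M/lam) * g M| + |∑ r ∈ Finset.Icc 1 (M-1),
              (F (2*((r:ℝ)+1)/lam) - F (2*r/lam)) * g r| := abs_sub _ _
      _ ≤ (Fb + L) * ((K+1)*(Real.log lam + 1)) := by linarith
    -- Piece A : Riemann sum
    set a : ℕ → ℝ := fun i => 2*(i:ℝ)/lam with hadef
    have haI : ∀ i : ℕ, i ≤ M → a i ∈ Set.Icc (0:ℝ) 1 := fun i hi => hpt i hi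
    have hastep : ∀ i : ℕ, a (i+1) - a i = 2/lam := by
      intro i; simp only [hadef]; push_cast; field_simp; ring
    have hale : ∀ i : ℕ, a i ≤ a (i+1) := by
      intro i; have := hastep i; linarith
    have hint : ∀ i, i < M → IntervalIntegrable F MeasureTheory.volume (a i) (a (i+1)) := by
      intro i hi
      apply ContinuousOn.intervalIntegrable
      apply hFc.mono
      rw [Set.uIcc_of_le (hale i)]
      exact Set.Icc_subset_Icc (haI i hi.le).1 (haI (i+1) hi).2
    have hsum := intervalIntegral.sum_integral_adjacent_intervals hint
    have ha0 : a 0 = 0 := by simp [hadef]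
    rw [ha0] at hsum
    have hintMa : IntervalIntegrable F MeasureTheory.volume 0 (a M) := by
      apply ContinuousOn.intervalIntegrable
      apply hFc.mono
      rw [Set.uIcc_of_le (haI M le_rfl).1]
      exact Set.Icc_subset_Icc le_rfl (haI M le_rfl).2
    have hintM1 : IntervalIntegrable F MeasureTheory.volume (a M) 1 := by
      apply ContinuousOn.intervalIntegrable
      apply hFc.mono
      rw [Set.uIcc_of_le (haI M le_rfl).2]
      exact Set.Icc_subset_Icc (haI M le_rfl).1 le_rfl
    have hsplit := intervalIntegral.integral_add_adjacent_intervals hintMa hintM1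
    have hterm : ∀ i, i < M →
        |(∫ x in a i..a (i+1), F x) - (2/lam) * F (a (i+1))| ≤ L*(2/lam)*(2/lam) := by
      intro i hi
      have hconst : (2/lam) * F (a (i+1)) = ∫ _x in a i..a (i+1), F (a (i+1)) := by
        rw [intervalIntegral.integral_const, hastep i, smul_eq_mul]
      rw [hconst, ← intervalIntegral.integral_sub (hint i hi) intervalIntegrable_const,
        ← Real.norm_eq_abs]
      have hbd : ∀ x ∈ Set.uIoc (a i) (a (i+1)), ‖F x - F (a (i+1))‖ ≤ L*(2/lam) := by
        intro x hx
        rw [Set.uIoc_of_le (hale i)] at hx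
        have hx1 : x ∈ Set.Icc (0:ℝ) 1 :=
          ⟨le_trans (haI i hi.le).1 hx.1.le, le_trans hx.2 (haI (i+1) hi).2⟩
        have hd := hF x hx1 (a (i+1)) (haI (i+1) hi)
        have habs : |x - a (i+1)| ≤ 2/lam := by
          rw [abs_le]
          have hst := hastep i
          constructor
          · linarith [hx.1]
          · linarith [hx.2, hh.le]
        calc ‖F x - F (a (i+1))‖ = |F x - F (a (i+1))| := Real.norm_eq_abs _
        _ ≤ L * |x - a (i+1)| := hd
        _ ≤ L * (2/lam) := by nlinarith
      calc ‖∫ x in a i..a (i+1), (F x - F (a (i+1)))‖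
          ≤ L*(2/lam) * |a (i+1) - a i| :=
            intervalIntegral.norm_integral_le_of_norm_le_const hbd
      _ = L*(2/lam)*(2/lam) := by rw [hastep i, abs_of_pos hh]
    have hA1 : |(∫ x in (0:ℝ)..(a M), F x) - (2/lam) * ∑ i ∈ Finset.range M, F (a (i+1))|
        ≤ L*(2/lam) := by
      rw [← hsum, Finset.mul_sum, ← Finset.sum_sub_distrib]
      calc |∑ i ∈ Finset.range M, ((∫ x in a i..a (i+1), F x) - (2/lam) * F (a (i+1)))|
          ≤ ∑ i ∈ Finset.range M,
              |(∫ x in a i..a (i+1), F x) - (2/lam) * F (a (i+1))| :=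
            Finset.abs_sum_le_sum_abs _ _
      _ ≤ ∑ _i ∈ Finset.range M, L*(2/lam)*(2/lam) :=
            Finset.sum_le_sum fun i hi => hterm i (Finset.mem_range.mp hi)
      _ = (M:ℝ) * (L*(2/lam)*(2/lam)) := by
            rw [Finset.sum_const, Finset.card_range, nsmul_eq_mul]
      _ ≤ L*(2/lam) := by nlinarith [mul_le_mul_of_nonneg_right hMh (mul_nonneg hL hh.le)]
    have hA2 : |∫ x in (a M)..1, F x| ≤ Fb * (2/lam) := by
      rw [← Real.norm_eq_abs]
      have hbd : ∀ x ∈ Set.uIoc (a M) 1, ‖F x‖ ≤ Fb := by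
        intro x hx
        rw [Set.uIoc_of_le (haI M le_rfl).2] at hx
        exact hFbd x ⟨le_trans (haI M le_rfl).1 hx.1.le, hx.2⟩
      have h2 : |1 - a M| ≤ 2/lam := by
        have e : a M = (M:ℝ)*(2/lam) := by simp only [hadef]; ring
        rw [abs_of_nonneg (by rw [e]; linarith [hMh] : (0:ℝ) ≤ 1 - a M), e]
        linarith
      calc ‖∫ x in a M..1, F x‖ ≤ Fb * |1 - a M| :=
            intervalIntegral.norm_integral_le_of_norm_le_const hbd
      _ ≤ Fb * (2/lam) := by nlinarith
    have hshift : ∑ r ∈ Finset.Icc 1 M, F (2*(r:ℝ)/lam) = ∑ i ∈ Finset.range M, F (a (i+1)) := by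
      rw [← Finset.Ico_add_one_right_eq_Icc, Finset.sum_Ico_eq_sum_range]
      apply Finset.sum_congr rfl
      intro i _
      simp only [hadef]
      congr 2
      push_cast
      ring
    have hA : |2 * (∑ r ∈ Finset.Icc 1 M, F (2*(r:ℝ)/lam)) - lam * ∫ v in (0:ℝ)..1, F v|
        ≤ 2*L + 2*Fb := by
      rw [hshift, ← hsplit]
      set X := (∫ x in (0:ℝ)..(a M), F x) - (2/lam) * ∑ i ∈ Finset.range M, F (a (i+1)) with hX
      set Y := ∫ x in (a M)..1, F x with hY
      have hrw : 2 * (∑ i ∈ Finset.range M, F (a (i+1)))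
          - lam * ((∫ x in (0:ℝ)..(a M), F x) + Y) = -(lam * X) - lam * Y := by
        rw [hX]; field_simp; ring
      rw [hrw]
      have e1 : lam * (L*(2/lam)) = 2*L := by field_simp
      have e2 : lam * (Fb*(2/lam)) = 2*Fb := by field_simp
      calc |-(lam * X) - lam * Y| ≤ |-(lam * X)| + |lam * Y| := abs_sub _ _
      _ = lam * |X| + lam * |Y| := by
          rw [abs_neg, abs_mul, abs_mul, abs_of_pos hlam0]
      _ ≤ lam * (L*(2/lam)) + lam * (Fb*(2/lam)) := by
          have := mul_le_mul_of_nonneg_left hA1 hlam0.le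
          have := mul_le_mul_of_nonneg_left hA2 hlam0.le
          linarith
      _ = 2*L + 2*Fb := by rw [e1, e2]
    -- Assembly
    have hsplitC : ∑ r ∈ Finset.Icc 1 M, F (2*(r:ℝ)/lam) * C r
        = (∑ r ∈ Finset.Icc 1 M, F (2*(r:ℝ)/lam) * (C r - 1))
          + ∑ r ∈ Finset.Icc 1 M, F (2*(r:ℝ)/lam) := by
      rw [← Finset.sum_add_distrib]
      exact Finset.sum_congr rfl fun r _ => by ring
    rw [Real.norm_eq_abs, abs_div, abs_of_pos hlam0]
    gcongr
    have hre : 2 * (∑ r ∈ Finset.Icc 1 M, F (2*(r:ℝ)/lam) * C r)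
        - lam * ∫ v in (0:ℝ)..1, F v
        = 2 * (∑ r ∈ Finset.Icc 1 M, F (2*(r:ℝ)/lam) * (C r - 1))
          + (2 * (∑ r ∈ Finset.Icc 1 M, F (2*(r:ℝ)/lam)) - lam * ∫ v in (0:ℝ)..1, F v) := by
      rw [hsplitC]; ring
    rw [hre]
    calc |2 * (∑ r ∈ Finset.Icc 1 M, F (2*(r:ℝ)/lam) * (C r - 1))
          + (2 * (∑ r ∈ Finset.Icc 1 M, F (2*(r:ℝ)/lam)) - lam * ∫ v in (0:ℝ)..1, F v)|
        ≤ |2 * (∑ r ∈ Finset.Icc 1 M, F (2*(r:ℝ)/lam) * (C r - 1))|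
          + |2 * (∑ r ∈ Finset.Icc 1 M, F (2*(r:ℝ)/lam)) - lam * ∫ v in (0:ℝ)..1, F v| :=
          abs_add_le _ _
    _ ≤ 2*(Fb+L)*((K+1)*(Real.log lam + 1)) + (2*L + 2*Fb) := by
        rw [abs_mul, abs_two]
        linarith
  · have h1 : Tendsto (fun x : ℝ => Real.log x / x) atTop (nhds 0) :=
      Real.isLittleO_log_id_atTop.tendsto_div_nhds_zero
    have h2 : Tendsto (fun x : ℝ => x⁻¹) atTop (nhds (0:ℝ)) := tendsto_inv_atTop_zero
    have h3 := (h1.const_mul (2*(Fb+L)*(K+1))).add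
      (h2.const_mul (2*(Fb+L)*(K+1) + (2*L + 2*Fb)))
    simp only [mul_zero, add_zero] at h3
    refine h3.congr fun x => ?_
    field_simp
    ring


lemma rpow23 {x : ℝ} (hx : 0 ≤ x) : x ^ ((2:ℝ)/3) ≤ x + 1 := by
  rcases le_or_gt x 1 with h | h
  · have : x ^ ((2:ℝ)/3) ≤ 1 := Real.rpow_le_one hx h (by norm_num)
    linarith
  · calc x ^ ((2:ℝ)/3) ≤ x ^ (1:ℝ) :=
        Real.rpow_le_rpow_of_exponent_le h.le (by norm_num)
    _ = x := Real.rpow_one x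
    _ ≤ x + 1 := by linarith

theorem stmt_19 (C : ℕ → ℝ) (hCnonneg : ∀ r, 0 ≤ C r)
    (h : ∃ K : ℝ, ∀ m : ℕ, 1 ≤ m →
      |(∑ r ∈ Finset.Icc 1 m, C r) - ((m : ℝ) - (1 / 2) * Real.log m)|
        ≤ K * (Real.log (m + 1)) ^ ((2:ℝ) / 3))
    (E : ℝ → ℝ) (hE : ContinuousOn E (Set.Icc 0 1)) :
    Tendsto
      (fun lam : ℝ =>
        (2 * (∑ r ∈ Finset.Icc 1 ⌊lam / 2⌋₊, E (2 * r / lam) * C r)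
          - lam * ∫ v in (0:ℝ)..1, E v) / lam)
      atTop (nhds 0) := by
  obtain ⟨K, hKb⟩ := h
  have hK0 : 0 ≤ K := by
    have h1 := hKb 1 le_rfl
    have hlog2 : (0:ℝ) < Real.log ((1:ℕ)+1) := by
      push_cast
      have : (1:ℝ) < 1 + 1 := by norm_num
      exact Real.log_pos this
    have hpow : (0:ℝ) < (Real.log ((1:ℕ)+1)) ^ ((2:ℝ)/3) :=
      Real.rpow_pos_of_pos hlog2 _
    nlinarith [abs_nonneg ((∑ r ∈ Finset.Icc 1 1, C r) - ((1:ℝ) - 1/2*Real.log 1))]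
  have hK1 : (0:ℝ) ≤ K + 1 := by linarith
  have hD : ∀ m : ℕ, |(∑ r ∈ Finset.Icc 1 m, C r) - (m:ℝ)|
      ≤ (K+1)*(Real.log (m+1) + 1) := by
    intro m
    rcases Nat.eq_zero_or_pos m with rfl | hm
    · simp
      positivity
    · have h1 := hKb m hm
      have hm1 : (1:ℝ) ≤ (m:ℝ) := by exact_mod_cast hm
      have hlognn : 0 ≤ Real.log ((m:ℝ)+1) := Real.log_nonneg (by linarith)
      have h2 : (Real.log ((m:ℝ)+1)) ^ ((2:ℝ)/3) ≤ Real.log ((m:ℝ)+1) + 1 :=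
        rpow23 hlognn
      have h3 : Real.log (m:ℝ) ≤ Real.log ((m:ℝ)+1) :=
        Real.log_le_log (by linarith) (by linarith)
      have h4 : 0 ≤ Real.log (m:ℝ) := Real.log_nonneg hm1
      have tri : |(∑ r ∈ Finset.Icc 1 m, C r) - (m:ℝ)|
          ≤ |(∑ r ∈ Finset.Icc 1 m, C r) - ((m:ℝ) - 1/2*Real.log m)|
            + |1/2*Real.log m| := by
        have e : (∑ r ∈ Finset.Icc 1 m, C r) - (m:ℝ)
            = ((∑ r ∈ Finset.Icc 1 m, C r) - ((m:ℝ) - 1/2*Real.log m))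
              + (-(1/2*Real.log m)) := by ring
        rw [e]
        exact (abs_add_le _ _).trans (by rw [abs_neg])
      have habs : |1/2*Real.log (m:ℝ)| = 1/2*Real.log (m:ℝ) := by
        rw [abs_of_nonneg]; linarith
      have hKm : K * (Real.log ((m:ℝ)+1)) ^ ((2:ℝ)/3)
          ≤ K * (Real.log ((m:ℝ)+1) + 1) := mul_le_mul_of_nonneg_left h2 hK0
      push_cast at h1 tri ⊢
      nlinarith
  rw [NormedAddCommGroup.tendsto_nhds_zero]
  intro ε hε
  obtain ⟨p, hp⟩ := exists_polynomial_near_of_continuousOn 0 1 E hE (ε/8) (by positivity)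
  obtain ⟨L0, hL0⟩ := (isCompact_Icc : IsCompact (Set.Icc (0:ℝ) 1)).exists_bound_of_continuousOn
      ((Polynomial.derivative p).continuousOn : ContinuousOn (fun x => Polynomial.eval x (Polynomial.derivative p)) (Set.Icc (0:ℝ) 1))
  set L : ℝ := max L0 0 with hLdef
  have hL : 0 ≤ L := le_max_right _ _
  have hpl : ∀ x ∈ Set.Icc (0:ℝ) 1, ∀ y ∈ Set.Icc (0:ℝ) 1,
      |Polynomial.eval x p - Polynomial.eval y p| ≤ L * |x - y| := by
    intro x hx y hy
    have hbd : ∀ t ∈ Set.Icc (0:ℝ) 1, ‖deriv (fun u => Polynomial.eval u p) t‖ ≤ L := by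
      intro t ht
      rw [Polynomial.deriv]
      exact le_trans (hL0 t ht) (le_max_left _ _)
    have := Convex.norm_image_sub_le_of_norm_deriv_le
      (fun t _ => p.differentiableAt) hbd (convex_Icc 0 1) hy hx
    simpa [Real.norm_eq_abs] using this
  have hlip := lip_case C K hK1 hD (fun x => Polynomial.eval x p) p.continuousOn L hL hpl
  have hEv1 := NormedAddCommGroup.tendsto_nhds_zero.mp hlip (ε/4) (by positivity)
  have hEv2 : ∀ᶠ lam : ℝ in atTop, (K+1)*(Real.log lam + 1) ≤ lam/2 := by
    have h1 : Tendsto (fun x : ℝ => Real.log x / x) atTop (nhds 0) :=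
      Real.isLittleO_log_id_atTop.tendsto_div_nhds_zero
    have h2 : Tendsto (fun x : ℝ => x⁻¹) atTop (nhds (0:ℝ)) := tendsto_inv_atTop_zero
    have h3 := (h1.const_mul (K+1)).add (h2.const_mul (K+1))
    simp only [mul_zero, add_zero] at h3
    have h4 : Tendsto (fun x : ℝ => ((K+1)*(Real.log x + 1))/x) atTop (nhds 0) := by
      refine h3.congr fun x => ?_
      field_simp
    filter_upwards [h4.eventually (ge_mem_nhds (by norm_num : (0:ℝ) < 1/2)),
      eventually_gt_atTop (0:ℝ)] with lam hr hl
    have : ((K+1)*(Real.log lam + 1))/lam ≤ 1/2 := hr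
    calc (K+1)*(Real.log lam + 1) = ((K+1)*(Real.log lam + 1))/lam * lam := by
          field_simp
    _ ≤ 1/2 * lam := by nlinarith
    _ = lam/2 := by ring
  filter_upwards [hEv1, hEv2, eventually_ge_atTop (2:ℝ)] with lam h1 h2 hlam
  have hlam0 : (0:ℝ) < lam := by linarith
  set M := ⌊lam/2⌋₊ with hMdef
  have hMle : (M:ℝ) ≤ lam/2 := Nat.floor_le (by positivity)
  have hpt : ∀ r : ℕ, r ∈ Finset.Icc 1 M → (2*(r:ℝ)/lam) ∈ Set.Icc (0:ℝ) 1 := by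
    intro r hr
    have hrM : (r:ℝ) ≤ M := by exact_mod_cast (Finset.mem_Icc.mp hr).2
    constructor
    · positivity
    · rw [div_le_one hlam0]; nlinarith
  -- bound on total mass
  have hSM : ∑ r ∈ Finset.Icc 1 M, C r ≤ lam := by
    have := (abs_le.mp (hD M)).2
    have hlog : Real.log ((M:ℝ)+1) ≤ Real.log lam := by
      apply Real.log_le_log (by positivity)
      linarith
    have : (∑ r ∈ Finset.Icc 1 M, C r) - (M:ℝ) ≤ (K+1)*(Real.log lam + 1) := by
      calc (∑ r ∈ Finset.Icc 1 M, C r) - (M:ℝ) ≤ (K+1)*(Real.log ((M:ℝ)+1) + 1) := this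
      _ ≤ (K+1)*(Real.log lam + 1) := by nlinarith
    linarith
  -- integrability
  have hip : IntervalIntegrable (fun x => Polynomial.eval x p) MeasureTheory.volume 0 1 :=
    (p.continuousOn.mono (by rw [Set.uIcc_of_le (by norm_num : (0:ℝ) ≤ 1)])).intervalIntegrable
  have hiE : IntervalIntegrable E MeasureTheory.volume 0 1 :=
    (hE.mono (by rw [Set.uIcc_of_le (by norm_num : (0:ℝ) ≤ 1)])).intervalIntegrable
  -- term 3
  have hT3 : |(∫ v in (0:ℝ)..1, Polynomial.eval v p) - ∫ v in (0:ℝ)..1, E v| ≤ ε/8 := by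
    rw [← intervalIntegral.integral_sub hip hiE, ← Real.norm_eq_abs]
    have hbd : ∀ x ∈ Set.uIoc (0:ℝ) 1, ‖Polynomial.eval x p - E x‖ ≤ ε/8 := by
      intro x hx
      rw [Set.uIoc_of_le (by norm_num : (0:ℝ) ≤ 1)] at hx
      exact (le_of_lt (hp x ⟨hx.1.le, hx.2⟩))
    calc ‖∫ x in (0:ℝ)..1, (Polynomial.eval x p - E x)‖ ≤ ε/8 * |1 - 0| :=
          intervalIntegral.norm_integral_le_of_norm_le_const hbd
    _ = ε/8 := by norm_num
  -- term 1
  have hT1 : |∑ r ∈ Finset.Icc 1 M, (E (2*(r:ℝ)/lam) - Polynomial.eval (2*(r:ℝ)/lam) p) * C r|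
      ≤ ε/8 * lam := by
    calc |∑ r ∈ Finset.Icc 1 M, (E (2*(r:ℝ)/lam) - Polynomial.eval (2*(r:ℝ)/lam) p) * C r|
        ≤ ∑ r ∈ Finset.Icc 1 M, |(E (2*(r:ℝ)/lam) - Polynomial.eval (2*(r:ℝ)/lam) p) * C r| :=
          Finset.abs_sum_le_sum_abs _ _
    _ ≤ ∑ r ∈ Finset.Icc 1 M, ε/8 * C r := by
        apply Finset.sum_le_sum
        intro r hr
        rw [abs_mul, abs_of_nonneg (hCnonneg r)]
        apply mul_le_mul_of_nonneg_right _ (hCnonneg r)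
        rw [abs_sub_comm]
        exact (hp _ (hpt r hr)).le
    _ = ε/8 * ∑ r ∈ Finset.Icc 1 M, C r := by rw [Finset.mul_sum]
    _ ≤ ε/8 * lam := by nlinarith [hSM]
  -- assemble
  rw [Real.norm_eq_abs]
  have hdecomp : (2 * (∑ r ∈ Finset.Icc 1 M, E (2*(r:ℝ)/lam) * C r)
        - lam * ∫ v in (0:ℝ)..1, E v) / lam
      = (2 * (∑ r ∈ Finset.Icc 1 M, (E (2*(r:ℝ)/lam) - Polynomial.eval (2*(r:ℝ)/lam) p) * C r)) / lam
        + (2 * (∑ r ∈ Finset.Icc 1 M, Polynomial.eval (2*(r:ℝ)/lam) p * C r)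
            - lam * ∫ v in (0:ℝ)..1, Polynomial.eval v p) / lam
        + ((∫ v in (0:ℝ)..1, Polynomial.eval v p) - ∫ v in (0:ℝ)..1, E v) := by
    have hsum : ∑ r ∈ Finset.Icc 1 M, (E (2*(r:ℝ)/lam) - Polynomial.eval (2*(r:ℝ)/lam) p) * C r
        = (∑ r ∈ Finset.Icc 1 M, E (2*(r:ℝ)/lam) * C r)
          - ∑ r ∈ Finset.Icc 1 M, Polynomial.eval (2*(r:ℝ)/lam) p * C r := by
      rw [← Finset.sum_sub_distrib]
      exact Finset.sum_congr rfl fun r _ => by ring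
    rw [hsum]
    field_simp
    ring
  rw [hdecomp]
  have hb1 : |(2 * (∑ r ∈ Finset.Icc 1 M, (E (2*(r:ℝ)/lam) - Polynomial.eval (2*(r:ℝ)/lam) p) * C r)) / lam|
      ≤ ε/4 := by
    rw [abs_div, abs_of_pos hlam0, abs_mul, abs_two, div_le_iff₀ hlam0]
    nlinarith [hT1]
  have hb2 : |(2 * (∑ r ∈ Finset.Icc 1 M, Polynomial.eval (2*(r:ℝ)/lam) p * C r)
      - lam * ∫ v in (0:ℝ)..1, Polynomial.eval v p) / lam| < ε/4 := by
    have := h1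
    rw [Real.norm_eq_abs] at this
    exact this
  calc |(2 * (∑ r ∈ Finset.Icc 1 M, (E (2*(r:ℝ)/lam) - Polynomial.eval (2*(r:ℝ)/lam) p) * C r)) / lam
        + (2 * (∑ r ∈ Finset.Icc 1 M, Polynomial.eval (2*(r:ℝ)/lam) p * C r)
            - lam * ∫ v in (0:ℝ)..1, Polynomial.eval v p) / lam
        + ((∫ v in (0:ℝ)..1, Polynomial.eval v p) - ∫ v in (0:ℝ)..1, E v)|
      ≤ |(2 * (∑ r ∈ Finset.Icc 1 M, (E (2*(r:ℝ)/lam) - Polynomial.eval (2*(r:ℝ)/lam) p) * C r)) / lam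
        + (2 * (∑ r ∈ Finset.Icc 1 M, Polynomial.eval (2*(r:ℝ)/lam) p * C r)
            - lam * ∫ v in (0:ℝ)..1, Polynomial.eval v p) / lam|
        + |(∫ v in (0:ℝ)..1, Polynomial.eval v p) - ∫ v in (0:ℝ)..1, E v| := abs_add_le _ _
  _ ≤ |(2 * (∑ r ∈ Finset.Icc 1 M, (E (2*(r:ℝ)/lam) - Polynomial.eval (2*(r:ℝ)/lam) p) * C r)) / lam|
        + |(2 * (∑ r ∈ Finset.Icc 1 M, Polynomial.eval (2*(r:ℝ)/lam) p * C r)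
            - lam * ∫ v in (0:ℝ)..1, Polynomial.eval v p) / lam|
        + |(∫ v in (0:ℝ)..1, Polynomial.eval v p) - ∫ v in (0:ℝ)..1, E v| := by
      linarith [abs_add_le ((2 * (∑ r ∈ Finset.Icc 1 M, (E (2*(r:ℝ)/lam) - Polynomial.eval (2*(r:ℝ)/lam) p) * C r)) / lam)
        ((2 * (∑ r ∈ Finset.Icc 1 M, Polynomial.eval (2*(r:ℝ)/lam) p * C r)
            - lam * ∫ v in (0:ℝ)..1, Polynomial.eval v p) / lam)]
  _ < ε := by linarith
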